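/- For an integer m ≥ 1, let D_m be the chord diagram on ZMod (2m) whose chords are {j, j+m} for 0 ≤ j < m (the Gauss diagram of the (2, m)-torus knot projection). Then any two distinct chords of D_m cross, so X(D_m) = m(m−1)/2 and T(D_m) = binomial(m, 3), while H(D_m) = 0; hence 3·H(D_m) − 3·T(D_m) + X(D_m) = m(m−1)(3−m)/2. In particular, for odd m = 2i+1 this value equals 2i(2i+1)(1−i), which is divisible by 4, so λ(D_{2i+1}) = i(2i+1)(1−i)/2. -/

import Mathlib

/-- A chord diagram on `2 * n` points: a fixed-point-free involution of `ZMod (2 * n)`.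
Its two-element orbits are called chords; the points lie on a circle in their
natural cyclic order. -/
structure ChordDiagram (n : ℕ) where
  inv : ZMod (2 * n) → ZMod (2 * n)
  involutive : Function.Involutive inv
  fixedPointFree : ∀ x, inv x ≠ x

/-- A chord: an unordered pair of points of the circle `ZMod m`. -/
abbrev Chord (m : ℕ) := Sym2 (ZMod m)

/-- `x` lies in the open cyclic arc running counterclockwise from `a` to `b`. -/
def InArc {m : ℕ} (a b x : ZMod m) : Prop :=
  0 < (x - a).val ∧ (x - a).val < (b - a).val

/-- Two chords cross: exactly one endpoint of the second lies in the open cyclic arc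
bounded by the first. -/
def Chord.Crosses {m : ℕ} (e f : Chord m) : Prop :=
  ∃ a b c d : ZMod m, e = s(a, b) ∧ f = s(c, d) ∧ Xor' (InArc a b c) (InArc a b d)

/-- The set of chords of a chord diagram. -/
def ChordDiagram.chords {n : ℕ} (D : ChordDiagram n) : Set (Chord (2 * n)) :=
  {e | ∃ x, e = s(x, D.inv x)}

/-- `P` is an (unordered) pair of crossing chords of `D`. -/
def ChordDiagram.IsCrossingPair {n : ℕ} (D : ChordDiagram n)
    (P : Finset (Chord (2 * n))) : Prop :=
  P.card = 2 ∧ (∀ e ∈ P, e ∈ D.chords) ∧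
    ∀ e ∈ P, ∀ f ∈ P, e ≠ f → Chord.Crosses e f

/-- `P` is an (unordered) triple of pairwise crossing chords of `D`. -/
def ChordDiagram.IsTripleChord {n : ℕ} (D : ChordDiagram n)
    (P : Finset (Chord (2 * n))) : Prop :=
  P.card = 3 ∧ (∀ e ∈ P, e ∈ D.chords) ∧
    ∀ e ∈ P, ∀ f ∈ P, e ≠ f → Chord.Crosses e f

/-- `P` is an H-triple of `D`: a triple `{a, b, c}` of chords of `D` such that `c`
crosses both `a` and `b` while `a` and `b` do not cross. -/
def ChordDiagram.IsHTriple {n : ℕ} (D : ChordDiagram n)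
    (P : Finset (Chord (2 * n))) : Prop :=
  P.card = 3 ∧ (∀ e ∈ P, e ∈ D.chords) ∧
    ∃ c ∈ P, (∀ e ∈ P, e ≠ c → Chord.Crosses c e) ∧
      ∀ a ∈ P, ∀ b ∈ P, a ≠ c → b ≠ c → a ≠ b → ¬ Chord.Crosses a b

/-- `X D`: the number of unordered pairs of chords of `D` that cross. -/
noncomputable def ChordDiagram.X {n : ℕ} (D : ChordDiagram n) : ℕ :=
  Set.ncard {P | D.IsCrossingPair P}

/-- `T D`: the number of unordered triples of chords of `D` that pairwise cross. -/
noncomputable def ChordDiagram.T {n : ℕ} (D : ChordDiagram n) : ℕ :=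
  Set.ncard {P | D.IsTripleChord P}

/-- `H D`: the number of H-triples of `D`. -/
noncomputable def ChordDiagram.H {n : ℕ} (D : ChordDiagram n) : ℕ :=
  Set.ncard {P | D.IsHTriple P}

/-- `D'` is obtained from `D` by deleting the set `S` of chords: deletion removes the
chords of `S` together with their endpoints and reindexes the remaining points
preserving their cyclic order; in particular it induces a bijection between the
remaining chords of `D` and the chords of `D'` preserving all crossing relations. -/
def ChordDiagram.DeletionOf {n n' : ℕ} (D : ChordDiagram n) (S : Set (Chord (2 * n)))
    (D' : ChordDiagram n') : Prop :=
  ∃ φ : {e : Chord (2 * n) // e ∈ D.chords ∧ e ∉ S} ≃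
      {e : Chord (2 * n') // e ∈ D'.chords},
    ∀ e f, Chord.Crosses e.1 f.1 ↔ Chord.Crosses (φ e).1 (φ f).1

/-- Four points occurring in this (strict counterclockwise) cyclic order;
in particular they are pairwise distinct. -/
def CyclicOrd4 {m : ℕ} (a b c d : ZMod m) : Prop :=
  0 < (b - a).val ∧ (b - a).val < (c - a).val ∧ (c - a).val < (d - a).val

/-- Six points occurring in this (strict counterclockwise) cyclic order;
in particular they are pairwise distinct. -/
def CyclicOrd6 {m : ℕ} (a b c d e f : ZMod m) : Prop :=
  0 < (b - a).val ∧ (b - a).val < (c - a).val ∧ (c - a).val < (d - a).val ∧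
    (d - a).val < (e - a).val ∧ (e - a).val < (f - a).val

/-- `D` is evenly interlaced: every chord of `D` crosses an even number of chords
of `D` (true for the Gauss diagram of every knot projection). -/
def ChordDiagram.EvenlyInterlaced {n : ℕ} (D : ChordDiagram n) : Prop :=
  ∀ e ∈ D.chords, Even (Set.ncard {f | f ∈ D.chords ∧ Chord.Crosses e f})

/-- Exactly two of the three propositions hold. -/
def ExactlyTwo (A B C : Prop) : Prop :=
  (A ∧ B ∧ ¬ C) ∨ (A ∧ ¬ B ∧ C) ∨ (¬ A ∧ B ∧ C)

/-- A strong RIII move: the three pairwise crossing chords `{p, q+1}`, `{q, r+1}`,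
`{r, p+1}` (where `p, p+1, q, q+1, r, r+1` occur in this cyclic order) are replaced by
the three chords `{p+1, q}`, `{q+1, r}`, `{r+1, p}`, all other chords being unchanged. -/
def ChordDiagram.StrongRIII {n : ℕ} (D D' : ChordDiagram n) : Prop :=
  ∃ p q r : ZMod (2 * n), CyclicOrd6 p (p + 1) q (q + 1) r (r + 1) ∧
    s(p, q + 1) ∈ D.chords ∧ s(q, r + 1) ∈ D.chords ∧ s(r, p + 1) ∈ D.chords ∧
    D'.chords = (D.chords \ {s(p, q + 1), s(q, r + 1), s(r, p + 1)}) ∪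
      {s(p + 1, q), s(q + 1, r), s(r + 1, p)}

lemma two_mul_choose_two (n : ℕ) : 2 * (n.choose 2 : ℤ) = (n : ℤ) * ((n : ℤ) - 1) := by
  induction n with
  | zero => simp
  | succ k ih =>
    rw [Nat.choose_succ_succ, Nat.choose_one_right]
    push_cast
    push_cast at ih
    linear_combination ih

lemma six_mul_choose_three (n : ℕ) :
    6 * (n.choose 3 : ℤ) = (n : ℤ) * ((n : ℤ) - 1) * ((n : ℤ) - 2) := by
  induction n with
  | zero => simp
  | succ k ih =>
    rw [Nat.choose_succ_succ]
    push_cast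
    push_cast at ih
    linear_combination ih + 3 * two_mul_choose_two k

/-- for `m ≥ 1`, the chord diagram `D_m` on `ZMod (2m)` whose chords are
`{j, j+m}` (the Gauss diagram of the `(2, m)`-torus knot projection, encoded by the
involution `x ↦ x + m`) has all chords pairwise crossing, so `X(D_m) = m(m−1)/2`,
`T(D_m) = C(m,3)`, `H(D_m) = 0`, hence `3H − 3T + X = m(m−1)(3−m)/2`; for odd
`m = 2i+1` this equals `2i(2i+1)(1−i)`, which is divisible by `4`, and
`λ(D_{2i+1}) = i(2i+1)(1−i)/2`. -/
theorem torus_knot_projection_counts (m : ℕ) (hm : 1 ≤ m) (D : ChordDiagram m)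
    (hD : ∀ x : ZMod (2 * m), D.inv x = x + (m : ZMod (2 * m))) :
    (∀ e ∈ D.chords, ∀ f ∈ D.chords, e ≠ f → Chord.Crosses e f) ∧
      D.X = m * (m - 1) / 2 ∧
      D.T = Nat.choose m 3 ∧
      D.H = 0 ∧
      2 * (3 * (D.H : ℤ) - 3 * (D.T : ℤ) + (D.X : ℤ)) =
        (m : ℤ) * ((m : ℤ) - 1) * (3 - (m : ℤ)) ∧
      ∀ i : ℕ, m = 2 * i + 1 →
        (3 * (D.H : ℤ) - 3 * (D.T : ℤ) + (D.X : ℤ) =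
            2 * (i : ℤ) * (2 * (i : ℤ) + 1) * (1 - (i : ℤ))) ∧
          ∃ lam : ℤ, 3 * (D.H : ℤ) - 3 * (D.T : ℤ) + (D.X : ℤ) = 4 * lam ∧
            2 * lam = (i : ℤ) * (2 * (i : ℤ) + 1) * (1 - (i : ℤ)) := by
  classical
  haveI : NeZero (2 * m) := ⟨by omega⟩
  have hmval : ((m : ZMod (2 * m))).val = m := by
    rw [ZMod.val_natCast]; exact Nat.mod_eq_of_lt (by omega)
  have hmne : (m : ZMod (2 * m)) ≠ 0 := by
    intro h; rw [h, ZMod.val_zero] at hmval; omega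
  have hmm0 : (m : ZMod (2 * m)) + m = 0 := by
    rw [← Nat.cast_add, show m + m = 2 * m by ring, ZMod.natCast_self]
  have haddne : ∀ a : ZMod (2 * m), a + m ≠ a := by
    intro a h
    exact hmne (by rwa [add_eq_left] at h)
  -- key crossing lemma
  have key : ∀ a c : ZMod (2 * m), c ≠ a → c ≠ a + m →
      Chord.Crosses s(a, a + (m : ZMod (2 * m))) s(c, c + (m : ZMod (2 * m))) := by
    intro a c h1 h2
    refine ⟨a, a + m, c, c + m, rfl, rfl, ?_⟩
    have e1 : a + (m : ZMod (2 * m)) - a = (m : ZMod (2 * m)) := by ring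
    have e2 : c + (m : ZMod (2 * m)) - a = (c - a) + m := by ring
    have hca : (c - a).val ≠ 0 := by
      intro h
      apply h1
      have : c - a = 0 := by
        have := (ZMod.val_eq_zero (c - a)).mp h
        exact this
      have := sub_eq_zero.mp this
      exact this
    have hcm : (c - a).val ≠ m := by
      intro h
      apply h2
      have hval : (c - a).val = ((m : ZMod (2 * m))).val := by rw [h, hmval]
      have : c - a = (m : ZMod (2 * m)) := ZMod.val_injective _ hval
      have := sub_eq_iff_eq_add.mp this
      rw [this]; ring
    have htlt : (c - a).val < 2 * m := ZMod.val_lt _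
    unfold InArc
    rw [e1, e2, hmval, ZMod.val_add, hmval]
    set t := (c - a).val with ht
    rcases lt_or_ge t m with h | h
    · have hmod : (t + m) % (2 * m) = t + m := Nat.mod_eq_of_lt (by omega)
      rw [hmod]
      simp only [Xor', Xor]
      omega
    · have hmod : (t + m) % (2 * m) = t - m := by
        rw [Nat.mod_eq_sub_mod (by omega)]
        have : t + m - 2 * m = t - m := by omega
        rw [this, Nat.mod_eq_of_lt (by omega)]
      rw [hmod]
      simp only [Xor', Xor]
      omega
  have hch : D.chords = {e | ∃ x, e = s(x, x + (m : ZMod (2 * m)))} := by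
    ext e; simp [ChordDiagram.chords, hD]
  -- all chords pairwise cross
  have cross : ∀ e ∈ D.chords, ∀ f ∈ D.chords, e ≠ f → Chord.Crosses e f := by
    intro e he f hf hef
    rw [hch] at he hf
    obtain ⟨x, rfl⟩ := he
    obtain ⟨y, rfl⟩ := hf
    apply key
    · rintro rfl; exact hef rfl
    · rintro rfl
      apply hef
      have : x + (m : ZMod (2 * m)) + m = x := by rw [add_assoc, hmm0, add_zero]
      rw [this, Sym2.eq_swap]
  -- the finset of chords
  set C : Finset (Chord (2 * m)) :=
    Finset.image (fun x : ZMod (2 * m) => s(x, x + (m : ZMod (2 * m)))) Finset.univ with hCdef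
  have hCset : D.chords = ↑C := by
    ext e
    simp only [hch, Set.mem_setOf_eq, hCdef, Finset.coe_image, Finset.coe_univ,
      Set.image_univ, Set.mem_range]
    exact ⟨fun ⟨x, hx⟩ => ⟨x, hx.symm⟩, fun ⟨x, hx⟩ => ⟨x, hx.symm⟩⟩
  have hfiber : ∀ a : ZMod (2 * m),
      (Finset.univ.filter
        (fun x : ZMod (2 * m) => s(x, x + (m : ZMod (2 * m))) = s(a, a + m)))
        = {a, a + m} := by
    intro a
    ext x
    simp only [Finset.mem_filter, Finset.mem_univ, true_and, Sym2.eq_iff,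
      Finset.mem_insert, Finset.mem_singleton]
    constructor
    · rintro (⟨rfl, -⟩ | ⟨rfl, -⟩)
      · exact Or.inl rfl
      · exact Or.inr rfl
    · rintro (rfl | rfl)
      · exact Or.inl ⟨rfl, rfl⟩
      · exact Or.inr ⟨rfl, by rw [add_assoc, hmm0, add_zero]⟩
  have hCcard : C.card = m := by
    have h1 := Finset.card_eq_sum_card_image
      (fun x : ZMod (2 * m) => s(x, x + (m : ZMod (2 * m)))) Finset.univ
    rw [Finset.card_univ, ZMod.card] at h1
    have h2 : ∀ b ∈ Finset.univ.image
        (fun x : ZMod (2 * m) => s(x, x + (m : ZMod (2 * m)))),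
        (Finset.univ.filter
          (fun x : ZMod (2 * m) => s(x, x + (m : ZMod (2 * m))) = b)).card = 2 := by
      intro b hb
      obtain ⟨a, -, rfl⟩ := Finset.mem_image.mp hb
      rw [hfiber a]
      exact Finset.card_pair (Ne.symm (haddne a))
    rw [Finset.sum_congr rfl h2, Finset.sum_const, smul_eq_mul] at h1
    rw [← hCdef] at h1
    omega
  -- X
  have hXset : {P | D.IsCrossingPair P} = ↑(C.powersetCard 2) := by
    ext P
    simp only [Set.mem_setOf_eq, Finset.mem_coe, Finset.mem_powersetCard]
    constructor
    · rintro ⟨h2, hsub, -⟩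
      refine ⟨fun e he => ?_, h2⟩
      have := hsub e he
      rwa [hCset, Finset.mem_coe] at this
    · rintro ⟨hsub, h2⟩
      have hsub' : ∀ e ∈ P, e ∈ D.chords := by
        intro e he; rw [hCset]; exact Finset.mem_coe.mpr (hsub he)
      exact ⟨h2, hsub', fun e he f hf hef => cross e (hsub' e he) f (hsub' f hf) hef⟩
  have hX : D.X = m.choose 2 := by
    rw [ChordDiagram.X, hXset, Set.ncard_coe_finset, Finset.card_powersetCard, hCcard]
  -- T
  have hTset : {P | D.IsTripleChord P} = ↑(C.powersetCard 3) := by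
    ext P
    simp only [Set.mem_setOf_eq, Finset.mem_coe, Finset.mem_powersetCard]
    constructor
    · rintro ⟨h2, hsub, -⟩
      refine ⟨fun e he => ?_, h2⟩
      have := hsub e he
      rwa [hCset, Finset.mem_coe] at this
    · rintro ⟨hsub, h2⟩
      have hsub' : ∀ e ∈ P, e ∈ D.chords := by
        intro e he; rw [hCset]; exact Finset.mem_coe.mpr (hsub he)
      exact ⟨h2, hsub', fun e he f hf hef => cross e (hsub' e he) f (hsub' f hf) hef⟩
  have hT : D.T = m.choose 3 := by
    rw [ChordDiagram.T, hTset, Set.ncard_coe_finset, Finset.card_powersetCard, hCcard]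
  -- H
  have hHset : {P | D.IsHTriple P} = (∅ : Set (Finset (Chord (2 * m)))) := by
    ext P
    simp only [Set.mem_setOf_eq, Set.mem_empty_iff_false, iff_false]
    rintro ⟨h3, hchP, c, hc, -, hnc⟩
    have h2 : (P.erase c).card = 2 := by rw [Finset.card_erase_of_mem hc, h3]
    obtain ⟨a, b, hab, hPe⟩ := Finset.card_eq_two.mp h2
    have ha : a ∈ P.erase c := by rw [hPe]; simp
    have hb : b ∈ P.erase c := by rw [hPe]; simp
    have haP := Finset.mem_of_mem_erase ha
    have hbP := Finset.mem_of_mem_erase hb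
    exact hnc a haP b hbP (Finset.ne_of_mem_erase ha) (Finset.ne_of_mem_erase hb) hab
      (cross a (hchP a haP) b (hchP b hbP) hab)
  have hH : D.H = 0 := by
    rw [ChordDiagram.H, hHset, Set.ncard_empty]
  -- main integer identity
  have hmain : 2 * (3 * (D.H : ℤ) - 3 * (D.T : ℤ) + (D.X : ℤ)) =
      (m : ℤ) * ((m : ℤ) - 1) * (3 - (m : ℤ)) := by
    rw [hH, hX, hT]
    push_cast
    linear_combination two_mul_choose_two m - six_mul_choose_three m
  refine ⟨cross, ?_, hT, hH, hmain, ?_⟩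
  · rw [hX, Nat.choose_two_right]
  · intro i him
    have hE : 3 * (D.H : ℤ) - 3 * (D.T : ℤ) + (D.X : ℤ) =
        2 * (i : ℤ) * (2 * (i : ℤ) + 1) * (1 - (i : ℤ)) := by
      have h2 : (2 : ℤ) * (3 * (D.H : ℤ) - 3 * (D.T : ℤ) + (D.X : ℤ)) =
          2 * (2 * (i : ℤ) * (2 * (i : ℤ) + 1) * (1 - (i : ℤ))) := by
        rw [hmain, him]
        push_cast
        ring
      exact mul_left_cancel₀ two_ne_zero h2
    refine ⟨hE, ?_⟩
    obtain ⟨k, hk⟩ := Int.even_mul_succ_self ((i : ℤ) - 1)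
    have hk' : ((i : ℤ) - 1) * ((i : ℤ) - 1 + 1) = k + k := hk
    refine ⟨-(2 * (i : ℤ) + 1) * k, ?_, ?_⟩
    · rw [hE]
      linear_combination (-2 * (2 * (i : ℤ) + 1)) * hk'
    · linear_combination (2 * (i : ℤ) + 1) * hk'
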